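/- Let Γ be a valued constraint language over a finite set D that is a core in the fractional sense (every operation in fPol₁⁺(Γ) is bijective), and let B be the set of bijective unary operations f on D satisfying ϱ ∘ f = ϱ (f applied coordinate-wise) for every ϱ ∈ Γ. Then a unary fractional operation ω on D is a fractional polymorphism of Γ if and only if supp(ω) ⊆ B. -/

import Mathlib

/-! Basic framework for Valued Constraint Satisfaction Problems (VCSP):
operations, clones, weightings, weighted clones, cost functions,
(weighted/fractional) polymorphisms, expressibility and weighted relational clones. -/

/-- A `k`-ary operation on `D`. -/
abbrev Op (D : Type) (k : ℕ) : Type := (Fin k → D) → D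

/-- The `i`-th `k`-ary projection on `D`. -/
def proj (D : Type) {k : ℕ} (i : Fin k) : Op D k := fun x => x i

/-- An operation is a projection. -/
def IsProj {D : Type} {k : ℕ} (f : Op D k) : Prop := ∃ i : Fin k, f = proj D i

/-- Superposition `f[g₁,…,g_k]` of a `k`-ary operation with `k` many `l`-ary operations. -/
def superposeOp {D : Type} {k l : ℕ} (f : Op D k) (g : Fin k → Op D l) : Op D l :=
  fun x => f fun i => g i x

/-- A clone of operations on `D`: contains all projections and is closed under superposition. -/
structure IsClone {D : Type} (C : ∀ k, Set (Op D k)) : Prop where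
  proj_mem : ∀ (k : ℕ) (i : Fin k), proj D i ∈ C k
  superpose_mem : ∀ (k l : ℕ) (f : Op D k) (g : Fin k → Op D l),
    f ∈ C k → (∀ i, g i ∈ C l) → superposeOp f g ∈ C l

/-- A `k`-ary weighting of the clone `C`: a rational-valued function on `k`-ary operations,
vanishing outside `C`, summing to `0`, and negative only on projections. -/
structure IsWeighting {D : Type} [Fintype D] [DecidableEq D] (C : ∀ k, Set (Op D k))
    {k : ℕ} (ω : Op D k → ℚ) : Prop where
  support_mem : ∀ f : Op D k, ω f ≠ 0 → f ∈ C k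
  sum_zero : ∑ f : Op D k, ω f = 0
  neg_imp_proj : ∀ f : Op D k, ω f < 0 → IsProj f

/-- Superposition of a `k`-ary weighting with `k` many `l`-ary operations. -/
def wSuperpose {D : Type} [Fintype D] [DecidableEq D] {k l : ℕ}
    (ω : Op D k → ℚ) (g : Fin k → Op D l) : Op D l → ℚ :=
  fun f' => ∑ f ∈ Finset.univ.filter (fun f : Op D k => superposeOp f g = f'), ω f

/-- A weighted clone over the clone `C`: a nonempty family of weightings of `C` closed under
non-negative scaling, addition of weightings of equal arity and proper superposition. -/
structure IsWeightedClone {D : Type} [Fintype D] [DecidableEq D]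
    (C : ∀ k, Set (Op D k)) (W : ∀ k, Set (Op D k → ℚ)) : Prop where
  clone : IsClone C
  weighting : ∀ (k : ℕ), ∀ ω ∈ W k, IsWeighting C ω
  nonempty : ∃ k, (W k).Nonempty
  scale_mem : ∀ (k : ℕ) (c : ℚ), 0 ≤ c → ∀ ω ∈ W k, (fun f => c * ω f) ∈ W k
  add_mem : ∀ (k : ℕ), ∀ ω₁ ∈ W k, ∀ ω₂ ∈ W k, (fun f => ω₁ f + ω₂ f) ∈ W k
  superpose_mem : ∀ (k l : ℕ), ∀ ω ∈ W k, ∀ g : Fin k → Op D l,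
    (∀ i, g i ∈ C l) → IsWeighting C (wSuperpose ω g) → wSuperpose ω g ∈ W l

/-- The positive clone of a family of weightings: all projections together with all operations
receiving positive weight from some weighting in the family. -/
def posClone {D : Type} [Fintype D] [DecidableEq D] (W : ∀ k, Set (Op D k → ℚ)) :
    ∀ k, Set (Op D k) :=
  fun k => {f | IsProj f ∨ ∃ ω ∈ W k, 0 < ω f}

/-- An `r`-ary cost function on `D`, with values in `ℚ ∪ {∞}`. -/
abbrev CostF (D : Type) (r : ℕ) : Type := (Fin r → D) → WithTop ℚ

/-- The feasibility relation of a cost function. -/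
def Feas {D : Type} {r : ℕ} (ϱ : CostF D r) : Set (Fin r → D) := {x | ϱ x ≠ ⊤}

/-- Coordinate-wise application of a `k`-ary operation to `k` many `r`-tuples. -/
def appRows {D : Type} {k r : ℕ} (f : Op D k) (xs : Fin k → Fin r → D) : Fin r → D :=
  fun j => f fun i => xs i j

/-- `f` is a polymorphism of `ϱ`: `Feas ϱ` is closed under coordinate-wise application of `f`. -/
def IsPolymorphism {D : Type} {k r : ℕ} (f : Op D k) (ϱ : CostF D r) : Prop :=
  ∀ xs : Fin k → Fin r → D, (∀ i, xs i ∈ Feas ϱ) → appRows f xs ∈ Feas ϱ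

/-- A valued constraint language on `D`: a set of cost functions of various arities. -/
abbrev VLang (D : Type) : Type := Set (Σ r : ℕ, CostF D r)

/-- The clone of polymorphisms of a language. -/
def Pol {D : Type} (Γ : VLang D) : ∀ k, Set (Op D k) :=
  fun _ => {f | ∀ ϱ ∈ Γ, IsPolymorphism f ϱ.2}

/-- Multiplication of an element of `ℚ ∪ {∞}` by a rational scalar (`c·∞ = ∞`). -/
def qmul (c : ℚ) (x : WithTop ℚ) : WithTop ℚ := WithTop.map (fun q => c * q) x

/-- The sum `∑_f ω(f)·ϱ(f(x₁,…,x_k))`, over operations with non-zero weight. -/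
def wSum {D : Type} [Fintype D] [DecidableEq D] {k r : ℕ}
    (ω : Op D k → ℚ) (ϱ : CostF D r) (xs : Fin k → Fin r → D) : WithTop ℚ :=
  ∑ f ∈ Finset.univ.filter (fun f : Op D k => ω f ≠ 0), qmul (ω f) (ϱ (appRows f xs))

/-- `ω` is a weighted polymorphism of the language `Γ`. -/
def IsWeightedPolymorphism {D : Type} [Fintype D] [DecidableEq D] (Γ : VLang D)
    {k : ℕ} (ω : Op D k → ℚ) : Prop :=
  IsWeighting (Pol Γ) ω ∧
    ∀ ϱ ∈ Γ, ∀ xs : Fin k → Fin ϱ.1 → D, (∀ i, xs i ∈ Feas ϱ.2) → wSum ω ϱ.2 xs ≤ 0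

/-- The weighted polymorphisms of a language. -/
def wPol {D : Type} [Fintype D] [DecidableEq D] (Γ : VLang D) :
    ∀ k, Set (Op D k → ℚ) :=
  fun _ => {ω | IsWeightedPolymorphism Γ ω}

/-- The positive clone `Pol⁺(Γ)` of a language. -/
def PolPlus {D : Type} [Fintype D] [DecidableEq D] (Γ : VLang D) : ∀ k, Set (Op D k) :=
  posClone (wPol Γ)

/-- The map `D → D` induced by a unary operation. -/
def unaryFun {D : Type} (f : Op D 1) : D → D := fun x => f fun _ => x

/-- A language is a core if every unary operation in its positive clone is bijective. -/
def IsCore {D : Type} [Fintype D] [DecidableEq D] (Γ : VLang D) : Prop :=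
  ∀ f ∈ PolPlus Γ 1, Function.Bijective (unaryFun f)

/-- An idempotent operation. -/
def Idem {D : Type} {k : ℕ} (f : Op D k) : Prop := ∀ x : D, (f fun _ => x) = x

/-- A cyclic operation: `f(x₁,…,x_k) = f(x₂,…,x_k,x₁)`. -/
def CyclicOp {D : Type} {k : ℕ} (f : Op D k) : Prop :=
  ∀ x : Fin k → D, f x = f (x ∘ ⇑(finRotate k))

/-- A conservative operation. -/
def Conservative {D : Type} {k : ℕ} (f : Op D k) : Prop :=
  ∀ x : Fin k → D, ∃ i, f x = x i

/-- A Taylor operation. -/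
def IsTaylor {D : Type} {k : ℕ} (t : Op D k) : Prop :=
  Idem t ∧ ∀ j : Fin k, ∃ a b : Fin k → Fin 2, a j = 0 ∧ b j = 1 ∧
    ∀ u : Fin 2 → D, (t fun i => u (a i)) = t fun i => u (b i)

/-- An instance of `VCSP(Γ)` with variable set `V`: a finite multiset of constraints,
each a tuple of variables together with a cost function from `Γ`. -/
structure VInstance (D : Type) (Γ : VLang D) (V : Type) where
  cons : Multiset (Σ r : ℕ, (Fin r → V) × CostF D r)
  mem_lang : ∀ c ∈ cons, (⟨c.1, c.2.2⟩ : Σ r : ℕ, CostF D r) ∈ Γ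

/-- The cost of an assignment for a VCSP instance. -/
def VInstance.cost {D V : Type} {Γ : VLang D} (I : VInstance D Γ V) (s : V → D) :
    WithTop ℚ :=
  (I.cons.map fun c => c.2.2 fun i => s (c.2.1 i)).sum

/-- A cost function is expressible over a language `Δ`. -/
def Expressible {D : Type} [Fintype D] [DecidableEq D] (Δ : VLang D) {r : ℕ}
    (ϱ : CostF D r) : Prop :=
  ∃ (n : ℕ) (I : VInstance D Δ (Fin n)) (v : Fin r → Fin n),
    ∀ x : Fin r → D,
      ϱ x = (Finset.univ.filter fun s : Fin n → D => ∀ i, s (v i) = x i).inf fun s => I.cost s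

/-- A language is closed under expressibility, non-negative scaling and
addition of rational constants. -/
def IsWClosed {D : Type} [Fintype D] [DecidableEq D] (Δ : VLang D) : Prop :=
  (∀ (r : ℕ) (ϱ : CostF D r), Expressible Δ ϱ → (⟨r, ϱ⟩ : Σ r : ℕ, CostF D r) ∈ Δ) ∧
  (∀ (r : ℕ) (ϱ : CostF D r) (c : ℚ), 0 ≤ c → (⟨r, ϱ⟩ : Σ r : ℕ, CostF D r) ∈ Δ →
    (⟨r, fun x => qmul c (ϱ x)⟩ : Σ r : ℕ, CostF D r) ∈ Δ) ∧
  (∀ (r : ℕ) (ϱ : CostF D r) (c : ℚ), (⟨r, ϱ⟩ : Σ r : ℕ, CostF D r) ∈ Δ →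
    (⟨r, fun x => ϱ x + (c : WithTop ℚ)⟩ : Σ r : ℕ, CostF D r) ∈ Δ)

/-- The weighted relational clone generated by `Γ`: the smallest language containing `Γ`
closed under expressibility, non-negative scaling and addition of rational constants. -/
def wRelClo {D : Type} [Fintype D] [DecidableEq D] (Γ : VLang D) : VLang D :=
  ⋂₀ {Δ : VLang D | Γ ⊆ Δ ∧ IsWClosed Δ}

/-- The weighting `(1/k)(∑_i 1_{f_i} − ∑_i 1_{π_i})` associated with a `k`-tuple of
`k`-ary operations (a multimorphism), weights added with multiplicity. -/
def multimorphismW {D : Type} [Fintype D] [DecidableEq D] {k : ℕ} (F : Fin k → Op D k) :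
    Op D k → ℚ :=
  fun g => (1 / (k : ℚ)) *
    (((Finset.univ.filter fun i : Fin k => F i = g).card : ℚ) -
     ((Finset.univ.filter fun i : Fin k => proj D i = g).card : ℚ))

/-- `Γ` admits the multimorphism `⟨F 0, …, F (k-1)⟩`. -/
def AdmitsMultimorphism {D : Type} [Fintype D] [DecidableEq D] {k : ℕ}
    (Γ : VLang D) (F : Fin k → Op D k) : Prop :=
  multimorphismW F ∈ wPol Γ k

/-- An `m`-ary fractional operation: a probability distribution on `m`-ary operations. -/
def IsFracOp {D : Type} [Fintype D] [DecidableEq D] {m : ℕ} (ω : Op D m → ℝ) : Prop :=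
  (∀ f, 0 ≤ ω f) ∧ ∑ f : Op D m, ω f = 1

/-- Multiplication of an element of `ℚ ∪ {∞}` by a real scalar, landing in `ℝ ∪ {∞}`. -/
def rmul (c : ℝ) (x : WithTop ℚ) : WithTop ℝ := WithTop.map (fun q : ℚ => c * (q : ℝ)) x

/-- `ω` is a fractional polymorphism of the language `Γ`. -/
def IsFracPolymorphism {D : Type} [Fintype D] [DecidableEq D] (Γ : VLang D) {m : ℕ}
    (ω : Op D m → ℝ) : Prop :=
  IsFracOp ω ∧ ∀ ϱ ∈ Γ, ∀ xs : Fin m → Fin ϱ.1 → D, (∀ i, xs i ∈ Feas ϱ.2) →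
    (∑ g ∈ Finset.univ.filter fun g : Op D m => 0 < ω g, rmul (ω g) (ϱ.2 (appRows g xs)))
      ≤ rmul (1 / (m : ℝ)) (∑ i : Fin m, ϱ.2 (xs i))

/-- The positive clone `fPol⁺(Γ)` defined via fractional polymorphisms. -/
def fPolPlus {D : Type} [Fintype D] [DecidableEq D] (Γ : VLang D) : ∀ k, Set (Op D k) :=
  fun k => {f | IsProj f ∨ ∃ ω : Op D k → ℝ, IsFracPolymorphism Γ ω ∧ 0 < ω f}

/-- Application of a binary operation to two elements. -/
def ap2 {D : Type} (f : Op D 2) (a b : D) : D := f ![a, b]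

/-- Application of a ternary operation to three elements. -/
def ap3 {D : Type} (f : Op D 3) (a b c : D) : D := f ![a, b, c]

/-- A ternary operation restricts to a majority operation on a subset `S`. -/
def IsMajorityOn {D : Type} (f : Op D 3) (S : Set D) : Prop :=
  ∀ x ∈ S, ∀ y ∈ S, ap3 f x x y = x ∧ ap3 f x y x = x ∧ ap3 f y x x = x

/-- A ternary operation restricts to a minority operation on a subset `S`. -/
def IsMinorityOn {D : Type} (f : Op D 3) (S : Set D) : Prop :=
  ∀ x ∈ S, ∀ y ∈ S, ap3 f x x y = y ∧ ap3 f x y x = y ∧ ap3 f y x x = y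

/-- The language `Γ_c`: `Γ` together with all unary cost functions `N_a`
(`N_a(a) = 0`, `N_a(x) = ∞` for `x ≠ a`). -/
def withConstants {D : Type} [DecidableEq D] (Γ : VLang D) : VLang D :=
  Γ ∪ {p : Σ r : ℕ, CostF D r |
        ∃ a : D, p = ⟨1, fun x => if x 0 = a then (0 : WithTop ℚ) else ⊤⟩}

/-- A language is conservative if it contains every `{0,1}`-valued unary cost function. -/
def ConservativeLang {D : Type} (Γ : VLang D) : Prop :=
  ∀ ϱ : CostF D 1, (∀ x, ϱ x = 0 ∨ ϱ x = 1) → (⟨1, ϱ⟩ : Σ r : ℕ, CostF D r) ∈ Γ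

/-- The coordinate-wise action of a `k`-ary operation on `A` on the power `A^n`. -/
def opPow {A : Type} (n : ℕ) {k : ℕ} (f : Op A k) : Op (Fin n → A) k :=
  fun xs c => f fun i => xs i c

/-- Regrouping an `(n·r)`-tuple over `A` into an `r`-tuple of elements of `A^n`. -/
def regroup (A : Type) (n r : ℕ) (y : Fin (n * r) → A) : Fin r → Fin n → A :=
  fun j c => y (finProdFinEquiv (c, j))


section Statement19Aux

open Finset Relation

variable {D : Type} [Fintype D] [DecidableEq D]

private lemma s19_iterate_eq_id {f : D → D} (hf : Function.Bijective f) :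
    ∃ n : ℕ, 0 < n ∧ f^[n] = id := by
  refine ⟨Fintype.card (Equiv.Perm D), Fintype.card_pos, ?_⟩
  have h : (Equiv.ofBijective f hf) ^ Fintype.card (Equiv.Perm D) = 1 := pow_card_eq_one
  have h2 := congrArg (fun p : Equiv.Perm D => ⇑p) h
  simp only [Equiv.Perm.coe_pow, Equiv.Perm.coe_one] at h2
  exact h2

/-- One application of a positively weighted unary operation, coordinatewise. -/
private def S19Step (ω : Op D 1 → ℝ) {r : ℕ} (y z : Fin r → D) : Prop :=
  ∃ g : Op D 1, 0 < ω g ∧ z = fun j => unaryFun g (y j)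

private lemma s19_reach_iterate (ω : Op D 1 → ℝ) {r : ℕ} (g : Op D 1) (hg : 0 < ω g)
    (y : Fin r → D) (m : ℕ) :
    Relation.ReflTransGen (S19Step ω) y (fun j => (unaryFun g)^[m] (y j)) := by
  induction m with
  | zero => simpa using Relation.ReflTransGen.refl
  | succ m ih =>
      exact ih.tail ⟨g, hg, by funext j; rw [Function.iterate_succ_apply']⟩

private lemma s19_step_rev (ω : Op D 1 → ℝ) {r : ℕ}
    (hbij : ∀ g : Op D 1, 0 < ω g → Function.Bijective (unaryFun g))
    {y z : Fin r → D} (h : S19Step ω y z) :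
    Relation.ReflTransGen (S19Step ω) z y := by
  obtain ⟨g, hg, rfl⟩ := h
  obtain ⟨n, hn, hid⟩ := s19_iterate_eq_id (hbij g hg)
  have key : (fun j => (unaryFun g)^[n - 1] (unaryFun g (y j))) = y := by
    funext j
    rw [← Function.iterate_succ_apply]
    have hn1 : (n - 1).succ = n := by omega
    rw [hn1, hid]
    rfl
  have h2 := s19_reach_iterate ω g hg (fun j => unaryFun g (y j)) (n - 1)
  rwa [key] at h2

private lemma s19_reach_symm (ω : Op D 1 → ℝ) {r : ℕ}
    (hbij : ∀ g : Op D 1, 0 < ω g → Function.Bijective (unaryFun g))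
    {y z : Fin r → D} (h : Relation.ReflTransGen (S19Step ω) y z) :
    Relation.ReflTransGen (S19Step ω) z y := by
  induction h with
  | refl => exact Relation.ReflTransGen.refl
  | tail _ h₂ ih => exact (s19_step_rev ω hbij h₂).trans ih

/-- The main combinatorial lemma: a "harmonic" inequality on orbits of a family of
bijections forces invariance of the cost function. -/
private lemma s19_const {r : ℕ} (ϱ : CostF D r) (ω : Op D 1 → ℝ)
    (hω : IsFracOp ω)
    (hbij : ∀ g : Op D 1, 0 < ω g → Function.Bijective (unaryFun g))
    (hfeas : ∀ y : Fin r → D, ϱ y ≠ ⊤ → ∀ g : Op D 1, 0 < ω g →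
      ϱ (fun j => unaryFun g (y j)) ≠ ⊤)
    (hharm : ∀ y : Fin r → D, ϱ y ≠ ⊤ →
      ∑ g ∈ Finset.univ.filter (fun g : Op D 1 => 0 < ω g),
        ω g * (((ϱ (fun j => unaryFun g (y j))).untopD 0 : ℚ) : ℝ)
        ≤ (((ϱ y).untopD 0 : ℚ) : ℝ))
    (g₀ : Op D 1) (hg₀ : 0 < ω g₀) (x : Fin r → D) :
    ϱ (fun j => unaryFun g₀ (x j)) = ϱ x := by
  classical
  set v : (Fin r → D) → ℝ := fun y => (((ϱ y).untopD 0 : ℚ) : ℝ) with hv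
  set S := Finset.univ.filter (fun g : Op D 1 => 0 < ω g) with hS
  have hSsum : ∑ g ∈ S, ω g = 1 := by
    have h1 : ∑ g ∈ S, ω g = ∑ g : Op D 1, ω g := by
      apply Finset.sum_subset (Finset.filter_subset _ _)
      intro g _ hgS
      have hng : ¬ 0 < ω g := by simpa [hS] using hgS
      exact le_antisymm (not_lt.mp hng) (hω.1 g)
    rw [h1]; exact hω.2
  have hreach_feas : ∀ y z : Fin r → D, Relation.ReflTransGen (S19Step ω) y z →
      ϱ y ≠ ⊤ → ϱ z ≠ ⊤ := by
    intro y z h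
    induction h with
    | refl => exact fun h => h
    | tail _ h₂ ih =>
        intro hy
        obtain ⟨g, hg, rfl⟩ := h₂
        exact hfeas _ (ih hy) g hg
  by_cases hx : ϱ x = ⊤
  · by_cases hgx : ϱ (fun j => unaryFun g₀ (x j)) = ⊤
    · rw [hgx, hx]
    · exact absurd (hreach_feas _ _ (s19_step_rev ω hbij ⟨g₀, hg₀, rfl⟩) hgx) (fun h => h hx)
  · set R : Finset (Fin r → D) :=
      Finset.univ.filter (fun y => Relation.ReflTransGen (S19Step ω) x y) with hR
    have hmemR : ∀ y : Fin r → D, y ∈ R ↔ Relation.ReflTransGen (S19Step ω) x y := by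
      intro y; simp [hR]
    have hxR : x ∈ R := (hmemR x).mpr Relation.ReflTransGen.refl
    have hRfeas : ∀ y ∈ R, ϱ y ≠ ⊤ := fun y hy => hreach_feas x y ((hmemR y).mp hy) hx
    have hclosed : ∀ y ∈ R, ∀ g : Op D 1, 0 < ω g → (fun j => unaryFun g (y j)) ∈ R := by
      intro y hy g hg
      exact (hmemR _).mpr (((hmemR y).mp hy).tail ⟨g, hg, rfl⟩)
    have hsum_inv : ∀ g : Op D 1, 0 < ω g →
        ∑ y ∈ R, v (fun j => unaryFun g (y j)) = ∑ y ∈ R, v y := by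
      intro g hg
      have hinj : Function.Injective (fun y : Fin r → D => fun j => unaryFun g (y j)) := by
        intro a b hab
        funext j
        exact (hbij g hg).injective (congrFun hab j)
      have himg : R.image (fun y => fun j => unaryFun g (y j)) = R := by
        apply Finset.eq_of_subset_of_card_le
        · intro z hz
          obtain ⟨y, hy, rfl⟩ := Finset.mem_image.mp hz
          exact hclosed y hy g hg
        · rw [Finset.card_image_of_injective _ hinj]
      calc ∑ y ∈ R, v (fun j => unaryFun g (y j))
          = ∑ z ∈ R.image (fun y => fun j => unaryFun g (y j)), v z :=
            (Finset.sum_image (fun a _ b _ h => hinj h)).symm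
        _ = ∑ z ∈ R, v z := by rw [himg]
    have hglobal : ∑ y ∈ R, (∑ g ∈ S, ω g * v (fun j => unaryFun g (y j))) = ∑ y ∈ R, v y := by
      rw [Finset.sum_comm]
      calc ∑ g ∈ S, ∑ y ∈ R, ω g * v (fun j => unaryFun g (y j))
          = ∑ g ∈ S, ω g * ∑ y ∈ R, v (fun j => unaryFun g (y j)) := by
            simp [Finset.mul_sum]
        _ = ∑ g ∈ S, ω g * ∑ y ∈ R, v y := by
            apply Finset.sum_congr rfl
            intro g hg
            rw [hsum_inv g (Finset.mem_filter.mp hg).2]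
        _ = (∑ g ∈ S, ω g) * ∑ y ∈ R, v y := by rw [Finset.sum_mul]
        _ = ∑ y ∈ R, v y := by rw [hSsum, one_mul]
    have hharm_eq : ∀ y ∈ R, ∑ g ∈ S, ω g * v (fun j => unaryFun g (y j)) = v y :=
      (Finset.sum_eq_sum_iff_of_le (fun y hy => hharm y (hRfeas y hy))).mp hglobal
    obtain ⟨y₀, hy₀R, hmax⟩ := R.exists_max_image v ⟨x, hxR⟩
    set M := v y₀ with hM
    have hstepM : ∀ y ∈ R, v y = M → ∀ g : Op D 1, 0 < ω g →
        v (fun j => unaryFun g (y j)) = M := by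
      intro y hyR hyM g hg
      by_contra hne
      have hgS : g ∈ S := by simp [hS, hg]
      have hlt : v (fun j => unaryFun g (y j)) < M :=
        lt_of_le_of_ne (hmax _ (hclosed y hyR g hg)) hne
      have hstrict : ∑ g' ∈ S, ω g' * v (fun j => unaryFun g' (y j)) < ∑ g' ∈ S, ω g' * M := by
        apply Finset.sum_lt_sum
        · intro i hi
          have hωi : 0 < ω i := (Finset.mem_filter.mp hi).2
          exact mul_le_mul_of_nonneg_left (hmax _ (hclosed y hyR i hωi)) hωi.le
        · exact ⟨g, hgS, mul_lt_mul_of_pos_left hlt hg⟩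
      rw [hharm_eq y hyR, hyM, ← Finset.sum_mul, hSsum, one_mul] at hstrict
      exact lt_irrefl M hstrict
    have hMprop : ∀ y z : Fin r → D, Relation.ReflTransGen (S19Step ω) y z →
        y ∈ R → v y = M → v z = M := by
      intro y z h
      induction h with
      | refl => exact fun _ h => h
      | @tail b c h₁ h₂ ih =>
          intro hyR hyM
          have hbR : b ∈ R := (hmemR b).mpr (((hmemR y).mp hyR).trans h₁)
          have hbM : v b = M := ih hyR hyM
          obtain ⟨g, hg, rfl⟩ := h₂
          exact hstepM b hbR hbM g hg
    have hy₀reach : Relation.ReflTransGen (S19Step ω) x y₀ := (hmemR y₀).mp hy₀R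
    have hxM : v x = M := hMprop y₀ x (s19_reach_symm ω hbij hy₀reach) hy₀R rfl
    have hgxM : v (fun j => unaryFun g₀ (x j)) = M := hstepM x hxR hxM g₀ hg₀
    obtain ⟨q, hq⟩ := WithTop.ne_top_iff_exists.mp hx
    obtain ⟨p, hp⟩ := WithTop.ne_top_iff_exists.mp (hfeas x hx g₀ hg₀)
    have hvx : v x = (q : ℝ) := by rw [hv]; simp [← hq]
    have hvgx : v (fun j => unaryFun g₀ (x j)) = (p : ℝ) := by rw [hv]; simp [← hp]
    have hpq : (p : ℝ) = (q : ℝ) := by rw [← hvgx, ← hvx, hgxM, hxM]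
    have hpq' : p = q := by exact_mod_cast hpq
    rw [← hq, ← hp, hpq']

/-- Processing of the fractional-polymorphism inequality for a single unary `ω`. -/
private lemma s19_process {r : ℕ} (ϱ : CostF D r) (ω : Op D 1 → ℝ)
    (h : ∀ xs : Fin 1 → Fin r → D, (∀ i, xs i ∈ Feas ϱ) →
      (∑ g ∈ Finset.univ.filter (fun g : Op D 1 => 0 < ω g), rmul (ω g) (ϱ (appRows g xs)))
        ≤ rmul (1 / ((1 : ℕ) : ℝ)) (∑ i : Fin 1, ϱ (xs i)))
    (y : Fin r → D) (hy : ϱ y ≠ ⊤) :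
    (∀ g : Op D 1, 0 < ω g → ϱ (fun j => unaryFun g (y j)) ≠ ⊤) ∧
    ∑ g ∈ Finset.univ.filter (fun g : Op D 1 => 0 < ω g),
        ω g * (((ϱ (fun j => unaryFun g (y j))).untopD 0 : ℚ) : ℝ)
      ≤ (((ϱ y).untopD 0 : ℚ) : ℝ) := by
  have key := h (fun _ => y) (fun _ => hy)
  obtain ⟨q, hq⟩ := WithTop.ne_top_iff_exists.mp hy
  have hr : rmul (1 / ((1 : ℕ) : ℝ)) (∑ i : Fin 1, ϱ ((fun _ => y) i))
      = ((((ϱ y).untopD 0 : ℚ) : ℝ) : WithTop ℝ) := by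
    rw [Fin.sum_univ_one, ← hq]
    simp [rmul]
  rw [hr] at key
  have hfeas : ∀ g : Op D 1, 0 < ω g → ϱ (fun j => unaryFun g (y j)) ≠ ⊤ := by
    intro g hg hbad
    have htop : ∑ g' ∈ Finset.univ.filter (fun g' : Op D 1 => 0 < ω g'),
        rmul (ω g') (ϱ (appRows g' (fun _ => y))) = ⊤ := by
      apply WithTop.sum_eq_top.mpr
      refine ⟨g, by simp [hg], ?_⟩
      show rmul (ω g) (ϱ (fun j => unaryFun g (y j))) = ⊤
      rw [hbad]
      exact WithTop.map_top _
    rw [htop] at key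
    exact WithTop.not_top_le_coe _ key
  refine ⟨hfeas, ?_⟩
  have hl : ∑ g ∈ Finset.univ.filter (fun g : Op D 1 => 0 < ω g),
      rmul (ω g) (ϱ (appRows g (fun _ => y)))
      = ((∑ g ∈ Finset.univ.filter (fun g : Op D 1 => 0 < ω g),
          ω g * (((ϱ (fun j => unaryFun g (y j))).untopD 0 : ℚ) : ℝ) : ℝ) : WithTop ℝ) := by
    rw [WithTop.coe_sum]
    apply Finset.sum_congr rfl
    intro g hg
    have hg' : 0 < ω g := (Finset.mem_filter.mp hg).2
    obtain ⟨p, hp⟩ := WithTop.ne_top_iff_exists.mp (hfeas g hg')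
    show rmul (ω g) (ϱ (fun j => unaryFun g (y j))) = _
    rw [← hp]
    simp [rmul]
  rw [hl] at key
  exact WithTop.coe_le_coe.mp key

end Statement19Aux

/-- For a core language `Γ` (in the fractional sense) with `B` the set of
bijective unary operations preserving every cost function of `Γ`, a unary fractional operation
is a fractional polymorphism of `Γ` iff its support is contained in `B`. -/
theorem unary_fractional_polymorphism_iff {D : Type} [Fintype D] [DecidableEq D] [Nonempty D]
    (Γ : VLang D)
    (hcore : ∀ f ∈ fPolPlus Γ 1, Function.Bijective (unaryFun f))
    (B : Set (Op D 1))
    (hB : B = {f : Op D 1 | Function.Bijective (unaryFun f) ∧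
      ∀ ϱ ∈ Γ, ∀ x : Fin ϱ.1 → D, ϱ.2 (fun j => unaryFun f (x j)) = ϱ.2 x})
    (ω : Op D 1 → ℝ) (hω : IsFracOp ω) :
    IsFracPolymorphism Γ ω ↔ ∀ g : Op D 1, 0 < ω g → g ∈ B := by
  constructor
  · intro hfp g hg
    have hbijall : ∀ g' : Op D 1, 0 < ω g' → Function.Bijective (unaryFun g') :=
      fun g' hg' => hcore g' (Or.inr ⟨ω, hfp, hg'⟩)
    rw [hB]
    refine ⟨hbijall g hg, ?_⟩
    intro ϱ hϱ x
    have hproc := fun y hy => s19_process ϱ.2 ω (hfp.2 ϱ hϱ) y hy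
    exact s19_const ϱ.2 ω hω hbijall (fun y hy => (hproc y hy).1)
      (fun y hy => (hproc y hy).2) g hg x
  · intro hsupp
    refine ⟨hω, ?_⟩
    intro ϱ hϱ xs hxs
    obtain ⟨q, hq⟩ := WithTop.ne_top_iff_exists.mp (hxs 0)
    have hrow : ∀ g : Op D 1, 0 < ω g → ϱ.2 (appRows g xs) = ϱ.2 (xs 0) := by
      intro g hg
      have hBg := hsupp g hg
      rw [hB] at hBg
      have h2 := hBg.2 ϱ hϱ (xs 0)
      have hx : appRows g xs = fun j => unaryFun g (xs 0 j) := by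
        funext j
        exact congrArg g (funext fun i => by rw [Subsingleton.elim i 0])
      rw [hx]
      exact h2
    have hRHS : rmul (1 / ((1 : ℕ) : ℝ)) (∑ i : Fin 1, ϱ.2 (xs i))
        = (((q : ℝ) : WithTop ℝ)) := by
      rw [Fin.sum_univ_one, ← hq]
      simp [rmul]
    have hLHS : ∑ g ∈ Finset.univ.filter (fun g : Op D 1 => 0 < ω g),
        rmul (ω g) (ϱ.2 (appRows g xs)) = (((q : ℝ) : WithTop ℝ)) := by
      have hterm : ∀ g ∈ Finset.univ.filter (fun g : Op D 1 => 0 < ω g),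
          rmul (ω g) (ϱ.2 (appRows g xs)) = ((ω g * (q : ℝ) : ℝ) : WithTop ℝ) := by
        intro g hg
        rw [hrow g (Finset.mem_filter.mp hg).2, ← hq]
        simp [rmul]
      rw [Finset.sum_congr rfl hterm, ← WithTop.coe_sum, ← Finset.sum_mul]
      have hSsum : ∑ g ∈ Finset.univ.filter (fun g : Op D 1 => 0 < ω g), ω g = 1 := by
        have h1 : ∑ g ∈ Finset.univ.filter (fun g : Op D 1 => 0 < ω g), ω g
            = ∑ g : Op D 1, ω g := by
          apply Finset.sum_subset (Finset.filter_subset _ _)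
          intro g _ hgS
          have hng : ¬ 0 < ω g := by simpa using hgS
          exact le_antisymm (not_lt.mp hng) (hω.1 g)
        rw [h1]; exact hω.2
      rw [hSsum, one_mul]
    rw [hLHS, hRHS]
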